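/- Let F_e : 2^V → ℝ_+ (e ∈ E) be nonnegative submodular functions with F_e(∅) = F_e(V) = 0, and let u, v, w ∈ V. For b ∈ ℝ^V, call φ ∈ ℝ_+^E feasible for b if Σ_e φ(e) F_e(X) ≥ b(X) for all X ⊆ V. If φ_uv is feasible for e_u − e_v and φ_vw is feasible for e_v − e_w, then the coordinatewise maximum φ_uv ∨ φ_vw is feasible for e_u − e_w. -/
import Mathlib


open scoped BigOperators

/-- If `φ_uv` is feasible for `e_u − e_v` and `φ_vw` is feasible for `e_v − e_w`,
then the coordinatewise maximum `φ_uv ∨ φ_vw` is feasible for `e_u − e_w`. -/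
theorem max_feasible_for_composition {V E : Type*} [Fintype V] [DecidableEq V] [Fintype E]
    (F : E → Finset V → ℝ)
    (hsub : ∀ e (S T : Finset V), F e (S ∪ T) + F e (S ∩ T) ≤ F e S + F e T)
    (hnn : ∀ e S, 0 ≤ F e S)
    (h0 : ∀ e, F e ∅ = 0) (hV : ∀ e, F e Finset.univ = 0)
    (u v w : V) (φuv φvw : E → ℝ)
    (huv : (∀ e, 0 ≤ φuv e) ∧ ∀ X : Finset V,
      (∑ x ∈ X, (Pi.single u (1 : ℝ) - Pi.single v 1 : V → ℝ) x) ≤ ∑ e, φuv e * F e X)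
    (hvw : (∀ e, 0 ≤ φvw e) ∧ ∀ X : Finset V,
      (∑ x ∈ X, (Pi.single v (1 : ℝ) - Pi.single w 1 : V → ℝ) x) ≤ ∑ e, φvw e * F e X) :
    (∀ e, 0 ≤ max (φuv e) (φvw e)) ∧ ∀ X : Finset V,
      (∑ x ∈ X, (Pi.single u (1 : ℝ) - Pi.single w 1 : V → ℝ) x) ≤
        ∑ e, max (φuv e) (φvw e) * F e X := by
  obtain ⟨huv0, huvF⟩ := huv
  obtain ⟨hvw0, hvwF⟩ := hvw
  refine ⟨fun e => le_max_of_le_left (huv0 e), fun X => ?_⟩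
  have key : ∀ φ : E → ℝ, (∀ e, φ e ≤ max (φuv e) (φvw e)) →
      ∑ e, φ e * F e X ≤ ∑ e, max (φuv e) (φvw e) * F e X := fun φ hφ =>
    Finset.sum_le_sum fun e _ => mul_le_mul_of_nonneg_right (hφ e) (hnn e X)
  have hsum : ∀ a : V, ∑ x ∈ X, (Pi.single a (1:ℝ)) x = if a ∈ X then 1 else 0 := by
    intro a
    simp [Pi.single_apply, Finset.sum_ite_eq']
  by_cases hv : v ∈ X
  · calc ∑ x ∈ X, (Pi.single u (1 : ℝ) - Pi.single w 1 : V → ℝ) x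
        ≤ ∑ x ∈ X, (Pi.single v (1 : ℝ) - Pi.single w 1 : V → ℝ) x := by
          simp only [Pi.sub_apply, Finset.sum_sub_distrib, hsum, hv, if_true]
          split_ifs <;> norm_num
      _ ≤ ∑ e, φvw e * F e X := hvwF X
      _ ≤ _ := key _ fun e => le_max_right _ _
  · calc ∑ x ∈ X, (Pi.single u (1 : ℝ) - Pi.single w 1 : V → ℝ) x
        ≤ ∑ x ∈ X, (Pi.single u (1 : ℝ) - Pi.single v 1 : V → ℝ) x := by
          simp only [Pi.sub_apply, Finset.sum_sub_distrib, hsum, hv, if_false]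
          split_ifs <;> norm_num
      _ ≤ ∑ e, φuv e * F e X := huvF X
      _ ≤ _ := key _ fun e => le_max_left _ _
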